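/- Let G = (V,E,e) be a connected finite simple rooted graph and k ≥ 1 such that σ = |V_e^{[k]}| ≥ 1, where V_e^{[k]} is the set of vertices of G at distance exactly k from e, and let M = max_{x ∈ V} |V_x^{[k]}|. Then for every N ≥ 1, the number of closed walks of length 4 based at the root e in the distance k-graph (G^{⋆N})^{[k]} of the N-fold star power — equivalently, the (e,e)-entry of (A^{[⋆N,k]})⁴ — satisfies (Nσ)² ≤ ((A^{[⋆N,k]})⁴)_{ee} ≤ (Nσ)² + NσMσ. Consequently 1 ≤ ((A^{[⋆N,k]}/√(Nσ))⁴)_{ee} ≤ 1 + M/N. -/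

import Mathlib

open MeasureTheory Filter
open scoped ENNReal Topology

noncomputable section

/-- The distance `k`-graph of a graph: same vertices, edges between vertices at distance `k`. -/
def distGraph {W : Type*} (H : SimpleGraph W) (k : ℕ) : SimpleGraph W where
  Adj x y := x ≠ y ∧ H.dist x y = k
  symm := ⟨fun x y h => ⟨h.1.symm, by rw [SimpleGraph.dist_comm]; exact h.2⟩⟩
  loopless := ⟨fun x h => h.1 rfl⟩

/-- Vertex set of the `N`-fold star power of a graph rooted at `e`:
the common root `none`, plus `N` copies of the non-root vertices. -/
abbrev StarVert (V : Type*) (e : V) (N : ℕ) := Option (Fin N × {v : V // v ≠ e})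

def starAdj {V : Type*} (G : SimpleGraph V) (e : V) (N : ℕ) :
    StarVert V e N → StarVert V e N → Prop
  | none, none => False
  | none, some q => G.Adj e q.2.1
  | some p, none => G.Adj p.2.1 e
  | some p, some q => p.1 = q.1 ∧ G.Adj p.2.1 q.2.1

/-- The `N`-fold star power of a rooted graph `(G, e)`: `N` copies of `G` glued at `e`. -/
def starPower {V : Type*} (G : SimpleGraph V) (e : V) (N : ℕ) :
    SimpleGraph (StarVert V e N) where
  Adj := starAdj G e N
  symm := by
    refine ⟨?_⟩
    rintro (_ | p) (_ | q) h
    · exact h.elim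
    · exact h.symm
    · exact h.symm
    · exact ⟨h.1.symm, h.2.symm⟩
  loopless := by
    refine ⟨?_⟩
    rintro (_ | p) h
    · exact h.elim
    · exact G.ne_of_adj h.2 rfl

/-- The vertex of the `i`-th copy of `G` in the `N`-fold star power corresponding to `v ∈ G`. -/
def rootedEmbed {V : Type*} [DecidableEq V] (e : V) (N : ℕ) (i : Fin N) (v : V) :
    StarVert V e N :=
  if h : v = e then none else some (i, ⟨v, h⟩)

open scoped Classical in
/-- The real adjacency matrix of a graph. -/
def adjMat {W : Type*} [Fintype W] (H : SimpleGraph W) : Matrix W W ℝ :=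
  fun x y => if H.Adj x y then 1 else 0

/-- The centered Bernoulli distribution `(1/2)δ_{-1} + (1/2)δ_1`. -/
def bern : Measure ℝ := (1/2 : ℝ≥0∞) • Measure.dirac (-1) + (1/2 : ℝ≥0∞) • Measure.dirac 1

/-- The Cauchy transform of a measure on `ℝ`. -/
def cauchyT (μ : Measure ℝ) (z : ℂ) : ℂ := ∫ x, (z - (x : ℂ))⁻¹ ∂μ

/-- The distance `d(μ₁,μ₂) = sup_{Im z ≥ 1} |G_{μ₁}(z) - G_{μ₂}(z)|`. -/
def cdist (μ₁ μ₂ : Measure ℝ) : ℝ :=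
  ⨆ z : {z : ℂ // 1 ≤ z.im}, ‖cauchyT μ₁ z - cauchyT μ₂ z‖


namespace StarAux

open SimpleGraph

variable {V : Type*} [DecidableEq V] {G : SimpleGraph V} {e : V} {N : ℕ}

def projHom (G : SimpleGraph V) (e : V) (N : ℕ) : starPower G e N →g G where
  toFun := fun x => x.elim e fun p => p.2.1
  map_rel' := by
    rintro (_ | p) (_ | q) h
    · exact h.elim
    · exact h
    · exact h
    · exact h.2

def embHom (G : SimpleGraph V) (e : V) (N : ℕ) (i : Fin N) : G →g starPower G e N where
  toFun := rootedEmbed e N i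
  map_rel' := by
    intro v w h
    unfold rootedEmbed
    split_ifs with hv hw hw
    · exact absurd (hv ▸ hw ▸ h) (G.irrefl)
    · subst hv; exact h
    · subst hw; exact h
    · exact ⟨rfl, h⟩

lemma rootedEmbed_root (i : Fin N) : rootedEmbed e N i e = none := dif_pos rfl

lemma rootedEmbed_ne (i : Fin N) (a : {v : V // v ≠ e}) :
    rootedEmbed e N i a.1 = some (i, a) := dif_neg a.2

lemma projHom_rootedEmbed (i : Fin N) (v : V) :
    projHom G e N (rootedEmbed e N i v) = v := by
  unfold projHom rootedEmbed
  split_ifs with h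
  · exact h.symm
  · rfl

lemma reachable_none (hconn : G.Connected) (x : StarVert V e N) :
    (starPower G e N).Reachable none x := by
  cases x with
  | none => exact Reachable.refl _
  | some p =>
    have h := (hconn e p.2.1).map (embHom G e N p.1)
    rw [show (embHom G e N p.1) e = none from rootedEmbed_root p.1,
      show (embHom G e N p.1) p.2.1 = some (p.1, p.2) from rootedEmbed_ne p.1 p.2] at h
    exact h

lemma star_connected (hconn : G.Connected) : (starPower G e N).Connected := by
  rw [connected_iff]
  exact ⟨fun x y => (reachable_none hconn x).symm.trans (reachable_none hconn y), ⟨none⟩⟩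

lemma dist_embed (hconn : G.Connected) (i : Fin N) (v w : V) :
    (starPower G e N).dist (rootedEmbed e N i v) (rootedEmbed e N i w) = G.dist v w := by
  apply le_antisymm
  · obtain ⟨p, hp⟩ := (hconn v w).exists_walk_length_eq_dist
    have := SimpleGraph.dist_le (p.map (embHom G e N i))
    rwa [Walk.length_map, hp] at this
  · obtain ⟨p, hp⟩ := ((star_connected hconn) (rootedEmbed e N i v)
      (rootedEmbed e N i w)).exists_walk_length_eq_dist
    have := SimpleGraph.dist_le (p.map (projHom G e N))
    rwa [Walk.length_map, hp, projHom_rootedEmbed, projHom_rootedEmbed] at this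

lemma copyIdx_eq {x y : StarVert V e N} (p : (starPower G e N).Walk x y)
    (h : (none : StarVert V e N) ∉ p.support) :
    Option.map Prod.fst x = Option.map Prod.fst y := by
  induction p with
  | nil => rfl
  | @cons u v w hadj q ih =>
    rw [Walk.support_cons, List.mem_cons] at h
    push_neg at h
    have h2 := ih h.2
    have hv : v ≠ none := fun hv => h.2 (hv ▸ q.start_mem_support)
    match u, v, hadj with
    | none, _, _ => exact absurd rfl h.1.symm
    | some a, none, _ => exact absurd rfl hv
    | some a, some b, hadj => simpa [hadj.1] using h2

lemma cross_dist_ge (hconn : G.Connected) {i j : Fin N} (hij : i ≠ j)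
    (a b : {v : V // v ≠ e}) :
    G.dist a.1 e + G.dist e b.1 ≤ (starPower G e N).dist (some (i, a)) (some (j, b)) := by
  obtain ⟨p, hp⟩ := ((star_connected hconn) (some (i, a)) (some (j, b))).exists_walk_length_eq_dist
  have hmem : (none : StarVert V e N) ∈ p.support := by
    by_contra h
    have := copyIdx_eq p h
    simp only [Option.map_some] at this
    exact hij (by injection this)
  have h1 : (starPower G e N).dist (some (i, a)) none ≤ (p.takeUntil none hmem).length :=
    SimpleGraph.dist_le _
  have h2 : (starPower G e N).dist none (some (j, b)) ≤ (p.dropUntil none hmem).length :=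
    SimpleGraph.dist_le _
  have hlen : (p.takeUntil none hmem).length + (p.dropUntil none hmem).length = p.length := by
    rw [← Walk.length_append, p.take_spec hmem]
  have e1 : (starPower G e N).dist (some (i, a)) none = G.dist a.1 e := by
    rw [← rootedEmbed_ne i a, ← rootedEmbed_root (e := e) i, dist_embed hconn]
  have e2 : (starPower G e N).dist none (some (j, b)) = G.dist e b.1 := by
    rw [← rootedEmbed_ne j b, ← rootedEmbed_root (e := e) j, dist_embed hconn]
  omega

lemma star_dist_none (hconn : G.Connected) (p : Fin N × {v : V // v ≠ e}) :
    (starPower G e N).dist none (some p) = G.dist e p.2.1 := by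
  rw [← rootedEmbed_ne p.1 p.2, ← rootedEmbed_root (e := e) p.1, dist_embed hconn]

lemma star_dist_same (hconn : G.Connected) (i : Fin N) (a b : {v : V // v ≠ e}) :
    (starPower G e N).dist (some (i, a)) (some (i, b)) = G.dist a.1 b.1 := by
  rw [← rootedEmbed_ne i a, ← rootedEmbed_ne i b, dist_embed hconn]


section Adj
variable (k : ℕ)

lemma adj_none_iff (hconn : G.Connected) (p : Fin N × {v : V // v ≠ e}) :
    (distGraph (starPower G e N) k).Adj none (some p) ↔ G.dist e p.2.1 = k := by
  constructor
  · intro h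
    rw [← star_dist_none hconn p]
    exact h.2
  · intro h
    exact ⟨(fun hc => nomatch hc), by rw [star_dist_none hconn p]; exact h⟩

lemma adj_same_iff (hconn : G.Connected) (i : Fin N) (a b : {v : V // v ≠ e}) :
    (distGraph (starPower G e N) k).Adj (some (i, a)) (some (i, b)) ↔
      a ≠ b ∧ G.dist a.1 b.1 = k := by
  constructor
  · intro h
    refine ⟨fun hab => h.1 (by rw [hab]), by rw [← star_dist_same hconn i a b]; exact h.2⟩
  · intro h
    exact ⟨fun hc => h.1 (by injection hc with h'; exact congrArg Prod.snd h'), by rw [star_dist_same hconn i a b]; exact h.2⟩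

lemma not_adj_cross (hconn : G.Connected) (hk : 1 ≤ k) {i j : Fin N} (hij : i ≠ j)
    (a b : {v : V // v ≠ e}) (ha : G.dist e a.1 = k) :
    ¬ (distGraph (starPower G e N) k).Adj (some (i, a)) (some (j, b)) := by
  intro h
  have h1 := cross_dist_ge hconn hij a b
  rw [h.2] at h1
  have hb : 0 < G.dist e b.1 := hconn.pos_dist_of_ne (fun hb => b.2 hb.symm)
  rw [G.dist_comm, ha] at h1
  omega

end Adj

section Count
variable [Fintype V] (k : ℕ)

@[simp] lemma projHom_some (q : Fin N × {v : V // v ≠ e}) :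
    projHom G e N (some q) = q.2.1 := rfl

open Finset in
lemma card_filter_dist (x : V) [DecidablePred (fun v => G.dist x v = k)] :
    (Finset.univ.filter (fun v => G.dist x v = k)).card = Nat.card {v : V | G.dist x v = k} := by
  classical
  rw [Nat.card_coe_set_eq, Set.ncard_eq_toFinset_card', Set.toFinset_setOf]

open Finset in
lemma row_sum (hconn : G.Connected) (hk : 1 ≤ k) :
    ∑ x : StarVert V e N, adjMat (distGraph (starPower G e N) k) none x
      = (N : ℝ) * ((Finset.univ.filter (fun v => G.dist e v = k)).card : ℝ) := by
  classical
  rw [Fintype.sum_option]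
  have h0 : adjMat (distGraph (starPower G e N) k) none none = 0 := by
    simp [adjMat]
  have h1 : ∀ p : Fin N × {v : V // v ≠ e},
      adjMat (distGraph (starPower G e N) k) none (some p)
        = if G.dist e p.2.1 = k then (1:ℝ) else 0 := by
    intro p; simp only [adjMat]
    by_cases h : G.dist e p.2.1 = k
    · rw [if_pos ((adj_none_iff k hconn p).2 h), if_pos h]
    · rw [if_neg (fun hc => h ((adj_none_iff k hconn p).1 hc)), if_neg h]
  rw [h0, zero_add, Finset.sum_congr rfl (fun p _ => h1 p), Fintype.sum_prod_type]
  have h2 : ∀ i : Fin N, ∑ a : {v : V // v ≠ e}, (if G.dist e a.1 = k then (1:ℝ) else 0)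
      = ((Finset.univ.filter (fun v => G.dist e v = k)).card : ℝ) := by
    intro i
    rw [← Finset.sum_subtype (Finset.univ.filter (fun v : V => v ≠ e))
      (by intro x; simp) (fun v => if G.dist e v = k then (1:ℝ) else 0)]
    rw [Finset.sum_filter_of_ne, Finset.sum_boole]
    intro x _ hx
    intro hxe
    subst hxe
    simp only [SimpleGraph.dist_self] at hx
    by_cases h : (0 : ℕ) = k
    · omega
    · simp [h] at hx
  rw [Finset.sum_congr rfl (fun i _ => h2 i), Finset.sum_const, Finset.card_univ,
    Fintype.card_fin, nsmul_eq_mul]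

open Finset in
lemma bound_sigma (hconn : G.Connected) (hk : 1 ≤ k) (p : Fin N × {v : V // v ≠ e}) :
    ∑ z : StarVert V e N,
        adjMat (distGraph (starPower G e N) k) none z *
          adjMat (distGraph (starPower G e N) k) z (some p)
      ≤ ((Finset.univ.filter (fun v => G.dist e v = k)).card : ℝ) := by
  classical
  set D := distGraph (starPower G e N) k with hD
  have h1 : ∀ z, adjMat D none z * adjMat D z (some p)
      = if (D.Adj none z ∧ D.Adj z (some p)) then (1:ℝ) else 0 := by
    intro z; simp only [adjMat]
    by_cases ha : D.Adj none z <;> by_cases hb : D.Adj z (some p) <;> simp [ha, hb]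
  rw [Finset.sum_congr rfl (fun z _ => h1 z), Finset.sum_boole]
  apply Nat.cast_le.2
  apply Finset.card_le_card_of_injOn (fun z => projHom G e N z)
  · intro z hz
    simp only [Finset.mem_coe, Finset.mem_filter, Finset.mem_univ, true_and] at hz ⊢
    rcases z with _ | q
    · exact absurd hz.1 (D.irrefl)
    · exact (adj_none_iff k hconn q).1 hz.1
  · intro z1 hz1 z2 hz2 hproj
    simp only [Finset.coe_filter, Set.mem_setOf_eq, Finset.mem_univ, true_and] at hz1 hz2
    rcases z1 with _ | q1
    · exact absurd hz1.1 (D.irrefl)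
    rcases z2 with _ | q2
    · exact absurd hz2.1 (D.irrefl)
    have hi1 : q1.1 = p.1 := by
      by_contra hne
      exact not_adj_cross k hconn hk hne q1.2 p.2 ((adj_none_iff k hconn q1).1 hz1.1) hz1.2
    have hi2 : q2.1 = p.1 := by
      by_contra hne
      exact not_adj_cross k hconn hk hne q2.2 p.2 ((adj_none_iff k hconn q2).1 hz2.1) hz2.2
    simp only [projHom_some] at hproj
    have : q1 = q2 := Prod.ext (hi1.trans hi2.symm) (Subtype.ext hproj)
    rw [this]

open Finset in
lemma bound_M (hconn : G.Connected) (hk : 1 ≤ k) (i : Fin N) (a : {v : V // v ≠ e})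
    (ha : G.dist e a.1 = k) :
    ∑ y : Fin N × {v : V // v ≠ e},
        adjMat (distGraph (starPower G e N) k) (some (i, a)) (some y)
      ≤ ((Finset.univ.filter (fun u => G.dist a.1 u = k)).card : ℝ) := by
  classical
  set D := distGraph (starPower G e N) k with hD
  have h1 : ∀ y, adjMat D (some (i, a)) (some y)
      = if D.Adj (some (i, a)) (some y) then (1:ℝ) else 0 := fun y => rfl
  rw [Finset.sum_congr rfl (fun y _ => h1 y), Finset.sum_boole]
  apply Nat.cast_le.2
  apply Finset.card_le_card_of_injOn (fun y => y.2.1)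
  · rintro ⟨j, b⟩ hy
    simp only [Finset.mem_coe, Finset.mem_filter, Finset.mem_univ, true_and] at hy ⊢
    have hyi : j = i := by
      by_contra hne
      exact not_adj_cross k hconn hk (fun h => hne h.symm) a b ha hy
    subst hyi
    exact ((adj_same_iff k hconn j a b).1 hy).2
  · intro y1 hy1 y2 hy2 hproj
    simp only [Finset.coe_filter, Set.mem_setOf_eq, Finset.mem_univ, true_and] at hy1 hy2
    have hi1 : y1.1 = i := by
      by_contra hne
      exact not_adj_cross k hconn hk (fun h => hne h.symm) a y1.2 ha hy1
    have hi2 : y2.1 = i := by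
      by_contra hne
      exact not_adj_cross k hconn hk (fun h => hne h.symm) a y2.2 ha hy2
    exact Prod.ext (hi1.trans hi2.symm) (Subtype.ext hproj)

end Count
end StarAux

/-- Bounds on the number of closed walks of length 4 based at the root in the
distance `k`-graph of the `N`-fold star power:
`(Nσ)² ≤ (A⁴)_{ee} ≤ (Nσ)² + NσMσ`, and hence `1 ≤ ((A/√(Nσ))⁴)_{ee} ≤ 1 + M/N`. -/
theorem star_power_fourth_moment_bounds
    {V : Type*} [Fintype V] [DecidableEq V] (G : SimpleGraph V) (e : V)
    (hconn : G.Connected) (k : ℕ) (hk : 1 ≤ k)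
    (σ : ℕ) (hσ : σ = Nat.card {v : V | G.dist e v = k}) (hσpos : 1 ≤ σ)
    (M : ℕ) (hM : M = Finset.univ.sup fun x : V => Nat.card {v : V | G.dist x v = k})
    (N : ℕ) (hN : 1 ≤ N) :
    ((N * σ : ℝ) ^ 2 ≤ ((adjMat (distGraph (starPower G e N) k)) ^ 4) none none ∧
      ((adjMat (distGraph (starPower G e N) k)) ^ 4) none none ≤
        (N * σ : ℝ) ^ 2 + (N * σ : ℝ) * M * σ) ∧
    ((1 : ℝ) ≤ (((Real.sqrt (N * σ))⁻¹ • adjMat (distGraph (starPower G e N) k)) ^ 4) none none ∧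
      (((Real.sqrt (N * σ))⁻¹ • adjMat (distGraph (starPower G e N) k)) ^ 4) none none ≤
        1 + (M : ℝ) / N) := by
  classical
  set D := distGraph (starPower G e N) k with hD
  set A := adjMat D with hA
  open StarAux in
  -- basic entry facts
  have hnonneg : ∀ x y, (0:ℝ) ≤ A x y := by
    intro x y; simp only [hA, adjMat]; split <;> norm_num
  have hmulself : ∀ x y, A x y * A x y = A x y := by
    intro x y; simp only [hA, adjMat]; split <;> norm_num
  have hsymm : ∀ x y, A x y = A y x := by
    intro x y; simp only [hA, adjMat]
    by_cases h : D.Adj x y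
    · rw [if_pos h, if_pos h.symm]
    · rw [if_neg h, if_neg (fun h' => h h'.symm)]
  -- σ and M in Finset terms
  have hσcard : ((Finset.univ.filter (fun v => G.dist e v = k)).card : ℕ) = σ := by
    rw [hσ, StarAux.card_filter_dist]
  have hMle : ∀ x : V, ((Finset.univ.filter (fun v => G.dist x v = k)).card : ℕ) ≤ M := by
    intro x
    rw [StarAux.card_filter_dist, hM]
    exact Finset.le_sup (f := fun x : V => Nat.card {v : V | G.dist x v = k}) (Finset.mem_univ x)
  -- row sum
  have hrow : ∑ x, A none x = (N : ℝ) * (σ : ℝ) := by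
    rw [hA, hD, StarAux.row_sum k hconn hk, hσcard]
  -- A² facts
  have hA2symm : ∀ y : StarVert V e N, (A ^ 2) y none = (A ^ 2) none y := by
    intro y
    rw [sq, Matrix.mul_apply, Matrix.mul_apply]
    exact Finset.sum_congr rfl fun x _ => by rw [hsymm y x, hsymm x none, mul_comm]
  have key4 : (A ^ 4) none none = ∑ y, (A ^ 2) none y * (A ^ 2) none y := by
    have h44 : A ^ 4 = A ^ 2 * A ^ 2 := by rw [← pow_add]
    rw [h44, Matrix.mul_apply]
    exact Finset.sum_congr rfl fun y _ => by rw [hA2symm y]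
  have hA2ee : (A ^ 2) none none = (N : ℝ) * (σ : ℝ) := by
    rw [sq, Matrix.mul_apply, ← hrow]
    exact Finset.sum_congr rfl fun x _ => by rw [hsymm x none, hmulself]
  -- lower bound
  have hlow : ((N : ℝ) * σ) ^ 2 ≤ (A ^ 4) none none := by
    rw [key4, sq, ← hA2ee]
    exact Finset.single_le_sum (f := fun y => (A ^ 2) none y * (A ^ 2) none y)
      (fun y _ => mul_self_nonneg _) (Finset.mem_univ (none : StarVert V e N))
  -- upper bound
  have hWle : ∀ p : Fin N × {v : V // v ≠ e}, (A ^ 2) none (some p) ≤ (σ : ℝ) := by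
    intro p
    rw [sq, Matrix.mul_apply]
    calc ∑ x, A none x * A x (some p) ≤ _ := StarAux.bound_sigma k hconn hk p
    _ = (σ : ℝ) := by exact_mod_cast congrArg (Nat.cast (R := ℝ)) hσcard
  have hWnn : ∀ p : Fin N × {v : V // v ≠ e}, 0 ≤ (A ^ 2) none (some p) := by
    intro p
    rw [sq, Matrix.mul_apply]
    exact Finset.sum_nonneg fun x _ => mul_nonneg (hnonneg _ _) (hnonneg _ _)
  have hT : ∑ p : Fin N × {v : V // v ≠ e},
      (A ^ 2) none (some p) * (A ^ 2) none (some p)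
        ≤ ((N : ℝ) * σ) * ((M : ℝ) * σ) := by
    have step1 : ∑ p : Fin N × {v : V // v ≠ e},
        (A ^ 2) none (some p) * (A ^ 2) none (some p)
        = ∑ x, A none x * ∑ p : Fin N × {v : V // v ≠ e},
            A x (some p) * (A ^ 2) none (some p) := by
      simp_rw [Finset.mul_sum]
      rw [Finset.sum_comm]
      apply Finset.sum_congr rfl
      intro p _
      rw [sq, Matrix.mul_apply, Finset.sum_mul]
      apply Finset.sum_congr rfl
      intro x _
      ring
    rw [step1]
    have step2 : ∀ x, A none x * (∑ p : Fin N × {v : V // v ≠ e},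
        A x (some p) * (A ^ 2) none (some p)) ≤ A none x * ((M : ℝ) * σ) := by
      intro x
      by_cases hadj : D.Adj none x
      · rcases x with _ | q
        · exact absurd hadj (D.irrefl)
        have hq : G.dist e q.2.1 = k := (StarAux.adj_none_iff k hconn q).1 hadj
        apply mul_le_mul_of_nonneg_left _ (hnonneg _ _)
        calc ∑ p : Fin N × {v : V // v ≠ e}, A (some q) (some p) * (A ^ 2) none (some p)
            ≤ ∑ p : Fin N × {v : V // v ≠ e}, A (some q) (some p) * (σ : ℝ) :=
              Finset.sum_le_sum fun p _ =>
                mul_le_mul_of_nonneg_left (hWle p) (hnonneg _ _)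
          _ = (∑ p : Fin N × {v : V // v ≠ e}, A (some q) (some p)) * (σ : ℝ) := by
              rw [Finset.sum_mul]
          _ ≤ (M : ℝ) * σ := by
              apply mul_le_mul_of_nonneg_right _ (Nat.cast_nonneg σ)
              calc ∑ p : Fin N × {v : V // v ≠ e}, A (some q) (some p)
                  ≤ _ := StarAux.bound_M k hconn hk q.1 q.2 hq
                _ ≤ (M : ℝ) := Nat.cast_le.2 (hMle q.2.1)
      · have hzero : A none x = 0 := by simp only [hA, adjMat, if_neg hadj]
        rw [hzero, zero_mul, zero_mul]
    calc ∑ x, A none x * ∑ p : Fin N × {v : V // v ≠ e},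
          A x (some p) * (A ^ 2) none (some p)
        ≤ ∑ x, A none x * ((M : ℝ) * σ) := Finset.sum_le_sum fun x _ => step2 x
      _ = (∑ x, A none x) * ((M : ℝ) * σ) := by rw [Finset.sum_mul]
      _ = ((N : ℝ) * σ) * ((M : ℝ) * σ) := by rw [hrow]
  have hupp : (A ^ 4) none none ≤ ((N : ℝ) * σ) ^ 2 + ((N : ℝ) * σ) * M * σ := by
    rw [key4, Fintype.sum_option, hA2ee]
    have : ((N:ℝ) * σ) * ((N:ℝ) * σ) = ((N:ℝ) * σ) ^ 2 := (sq ((N:ℝ)*σ)).symm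
    rw [this]
    have := hT
    nlinarith [hT]
  have hxpos : (0:ℝ) < (N : ℝ) * σ := by
    have h1 : (1:ℝ) ≤ (N:ℝ) := by exact_mod_cast hN
    have h2 : (1:ℝ) ≤ (σ:ℝ) := by exact_mod_cast hσpos
    nlinarith
  have hsmul : (((Real.sqrt ((N:ℝ) * σ))⁻¹ • A) ^ 4) none none
      = (((N:ℝ) * σ) ^ 2)⁻¹ * (A ^ 4) none none := by
    rw [smul_pow, Matrix.smul_apply, smul_eq_mul]
    congr 1
    rw [inv_pow, show (4:ℕ) = 2 * 2 from rfl, pow_mul, Real.sq_sqrt hxpos.le]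
  have hinv : (((N:ℝ) * σ) ^ 2)⁻¹ * (((N:ℝ) * σ) ^ 2) = 1 :=
    inv_mul_cancel₀ (by positivity)
  refine ⟨⟨hlow, hupp⟩, ?_, ?_⟩
  · rw [hsmul, ← hinv]
    exact mul_le_mul_of_nonneg_left hlow (by positivity)
  · rw [hsmul]
    have h1 : (((N:ℝ) * σ) ^ 2)⁻¹ * (A ^ 4) none none
        ≤ (((N:ℝ) * σ) ^ 2)⁻¹ * (((N : ℝ) * σ) ^ 2 + ((N : ℝ) * σ) * M * σ) :=
      mul_le_mul_of_nonneg_left hupp (by positivity)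
    have hNne : (N:ℝ) ≠ 0 := by positivity
    have hσne : (σ:ℝ) ≠ 0 := by
      have h2 : (1:ℝ) ≤ (σ:ℝ) := by exact_mod_cast hσpos
      positivity
    have h2 : (((N:ℝ) * σ) ^ 2)⁻¹ * (((N : ℝ) * σ) ^ 2 + ((N : ℝ) * σ) * M * σ)
        = 1 + (M : ℝ) / N := by
      field_simp
    linarith

end
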